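/- Let r, s ≥ 0 be integers with n = 2(r+s) ≥ 1, and let v ∈ (ℤ/4ℤ)^n have type (t₀, t₁, t₂, t₃). Then C(n; t₀,t₁,t₂,t₃) · λ(v) = C(n; r,s,r,s) · c, where c is the coefficient of x^{t₀} y^{t₁} z^{t₂} w^{t₃} in the integer polynomial ((x+z)² − (y+w)²)^r · ((x−z)² + (y−w)²)^s. -/

import Mathlib

/-- The number of coordinates of `v ∈ (ℤ/4ℤ)^n` equal to `k`. -/
def typeCount {n : ℕ} (v : Fin n → ZMod 4) (k : ZMod 4) : ℕ :=
  (Finset.univ.filter fun i => v i = k).card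

/-- `v ∈ (ℤ/4ℤ)^n` has type `(t₀, t₁, t₂, t₃)`. -/
def HasType {n : ℕ} (v : Fin n → ZMod 4) (t0 t1 t2 t3 : ℕ) : Prop :=
  typeCount v 0 = t0 ∧ typeCount v 1 = t1 ∧ typeCount v 2 = t2 ∧ typeCount v 3 = t3

instance {n : ℕ} (v : Fin n → ZMod 4) (t0 t1 t2 t3 : ℕ) :
    Decidable (HasType v t0 t1 t2 t3) := by
  unfold HasType; infer_instance

/-- `|S(v, a)|`: the number of vectors `b` of type `(r, s, r, s)` with
`v · b = a` in `ℤ/4ℤ`. -/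
def Scard {n : ℕ} (r s : ℕ) (v : Fin n → ZMod 4) (a : ZMod 4) : ℕ :=
  (Finset.univ.filter fun b : Fin n → ZMod 4 =>
    HasType b r s r s ∧ (∑ i, v i * b i) = a).card

/-- The eigenvalue `λ(v) = |S(v,0)| - |S(v,2)|` of `Cay((ℤ/4ℤ)^n, S)`. -/
def lambdaEV {n : ℕ} (r s : ℕ) (v : Fin n → ZMod 4) : ℤ :=
  (Scard r s v 0 : ℤ) - (Scard r s v 2 : ℤ)

/-- The multinomial coefficient `C(n; r, s, r, s)` (with `n = 2(r+s)`). -/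
def multinomRSRS (r s : ℕ) : ℕ :=
  Nat.multinomial Finset.univ ![r, s, r, s]

open Finset MvPolynomial

/-! ### Gaussian integers and the character `ι` -/

/-- `i` as a Gaussian integer. -/
def gi : GaussianInt := Zsqrtd.sqrtd

lemma gi_sq : gi ^ 2 = -1 := by
  rw [pow_two]; ext <;> simp [gi, Zsqrtd.re_mul, Zsqrtd.im_mul]

lemma gi_four : gi ^ 4 = 1 := by
  have : gi ^ 4 = (gi ^ 2) ^ 2 := by ring
  rw [this, gi_sq]; ring

lemma gi_pow_mod (m : ℕ) : gi ^ (m % 4) = gi ^ m := by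
  conv_rhs => rw [← Nat.div_add_mod m 4, pow_add, pow_mul, gi_four, one_pow, one_mul]

/-- `ι(a) = i^a`. -/
def iot (a : ZMod 4) : GaussianInt := gi ^ a.val

lemma iot_add (a b : ZMod 4) : iot (a + b) = iot a * iot b := by
  unfold iot
  rw [← pow_add, ← gi_pow_mod (a.val + b.val), ZMod.val_add]

lemma iot_zero : iot 0 = 1 := by unfold iot; norm_num

lemma iot_sum {γ : Type*} (s : Finset γ) (c : γ → ZMod 4) :
    iot (∑ i ∈ s, c i) = ∏ i ∈ s, iot (c i) := by
  induction s using Finset.cons_induction with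
  | empty => simpa using iot_zero
  | cons a s ha ih => rw [Finset.sum_cons, Finset.prod_cons, iot_add, ih]

lemma iot_one : iot 1 = gi := by
  have h : (1 : ZMod 4).val = 1 := by decide
  unfold iot; rw [h, pow_one]
lemma iot_two : iot 2 = -1 := by
  have : (2 : ZMod 4).val = 2 := by decide
  unfold iot; rw [this, gi_sq]
lemma iot_three : iot 3 = -gi := by
  have h : (3 : ZMod 4).val = 3 := by decide
  unfold iot; rw [h, pow_succ, gi_sq]; ring

/-! ### `Fin 4 ≃ ZMod 4` and multiplicity counts -/

/-- The equivalence `Fin 4 ≃ ZMod 4`. -/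
def e4 : Fin 4 ≃ ZMod 4 where
  toFun j := (j.val : ZMod 4)
  invFun a := ⟨a.val, a.val_lt⟩
  left_inv := by decide
  right_inv := by decide

/-- Multiplicity function of `f`. -/
noncomputable def cnt {n : ℕ} (f : Fin n → Fin 4) : Fin 4 →₀ ℕ :=
  ∑ i, Finsupp.single (f i) 1

lemma cnt_apply {n : ℕ} (f : Fin n → Fin 4) (k : Fin 4) :
    cnt f k = (univ.filter fun i => f i = k).card := by
  rw [Finset.card_filter, cnt, Finsupp.finset_sum_apply]
  exact Finset.sum_congr rfl fun i _ => by rw [Finsupp.single_apply]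

/-- The target exponent finsupp. -/
noncomputable def mfun (t0 t1 t2 t3 : ℕ) : Fin 4 →₀ ℕ :=
  Finsupp.single 0 t0 + Finsupp.single 1 t1 + Finsupp.single 2 t2 + Finsupp.single 3 t3

lemma fin4_eq : ∀ j : Fin 4, j = 0 ∨ j = 1 ∨ j = 2 ∨ j = 3 := by decide

lemma fin4_cases (P : Fin 4 → Prop) (h0 : P 0) (h1 : P 1) (h2 : P 2) (h3 : P 3) :
    ∀ j, P j := fun j => by
  rcases fin4_eq j with h | h | h | h <;> rw [h] <;> assumption

lemma mfun_0 (t0 t1 t2 t3 : ℕ) : mfun t0 t1 t2 t3 0 = t0 := by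
  simp [mfun, Finsupp.single_apply]
lemma mfun_1 (t0 t1 t2 t3 : ℕ) : mfun t0 t1 t2 t3 1 = t1 := by
  simp [mfun, Finsupp.single_apply]
lemma mfun_2 (t0 t1 t2 t3 : ℕ) : mfun t0 t1 t2 t3 2 = t2 := by
  simp [mfun, Finsupp.single_apply]
lemma mfun_3 (t0 t1 t2 t3 : ℕ) : mfun t0 t1 t2 t3 3 = t3 := by
  simp [mfun, Finsupp.single_apply]

lemma typeCount_eq_cnt {n : ℕ} (f : Fin n → Fin 4) (k : Fin 4) :
    typeCount (fun i => e4 (f i)) (e4 k) = cnt f k := by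
  rw [typeCount, cnt_apply]
  congr 1
  apply Finset.filter_congr
  intro i _
  simp [e4.apply_eq_iff_eq]

lemma hasType_iff_cnt {n : ℕ} (f : Fin n → Fin 4) (t0 t1 t2 t3 : ℕ) :
    HasType (fun i => e4 (f i)) t0 t1 t2 t3 ↔ cnt f = mfun t0 t1 t2 t3 := by
  rw [Finsupp.ext_iff]
  have h0 : (0 : ZMod 4) = e4 0 := by decide
  have h1 : (1 : ZMod 4) = e4 1 := by decide
  have h2 : (2 : ZMod 4) = e4 2 := by decide
  have h3 : (3 : ZMod 4) = e4 3 := by decide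
  constructor
  · rintro ⟨c0, c1, c2, c3⟩
    refine fin4_cases _ ?_ ?_ ?_ ?_
    · rw [← typeCount_eq_cnt, ← h0, mfun_0]; exact c0
    · rw [← typeCount_eq_cnt, ← h1, mfun_1]; exact c1
    · rw [← typeCount_eq_cnt, ← h2, mfun_2]; exact c2
    · rw [← typeCount_eq_cnt, ← h3, mfun_3]; exact c3
  · intro h
    exact ⟨by rw [h0, typeCount_eq_cnt, h 0, mfun_0],
           by rw [h1, typeCount_eq_cnt, h 1, mfun_1],
           by rw [h2, typeCount_eq_cnt, h 2, mfun_2],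
           by rw [h3, typeCount_eq_cnt, h 3, mfun_3]⟩

/-! ### Polynomial expansion lemmas -/

lemma prod_monomial {γ : Type*} {S : Type*} [CommSemiring S] (s : Finset γ)
    (d : γ → (Fin 4 →₀ ℕ)) :
    (∏ i ∈ s, monomial (d i) (1 : S)) = monomial (∑ i ∈ s, d i) 1 := by
  induction s using Finset.cons_induction with
  | empty => simp
  | cons a s ha ih => rw [Finset.prod_cons, Finset.sum_cons, ih, monomial_mul, one_mul]

/-- Expansion of a product of linear forms; coefficient extraction. -/
lemma coeff_prod_linear {S : Type*} [CommSemiring S] (n : ℕ) (a : Fin n → Fin 4 → S)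
    (m : Fin 4 →₀ ℕ) :
    MvPolynomial.coeff m (∏ i, ∑ j : Fin 4, C (a i j) * X j) =
      ∑ f ∈ univ.filter (fun f : Fin n → Fin 4 => cnt f = m), ∏ i, a i (f i) := by
  rw [Finset.prod_univ_sum]
  have h1 : ∀ f : Fin n → Fin 4,
      (∏ i, (C (a i (f i)) * X (f i)) : MvPolynomial (Fin 4) S)
        = monomial (cnt f) (∏ i, a i (f i)) := by
    intro f
    rw [Finset.prod_mul_distrib, ← map_prod C (fun i => a i (f i)) univ]
    have : (∏ i, (X (f i)) : MvPolynomial (Fin 4) S) = monomial (cnt f) 1 := by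
      rw [cnt, ← prod_monomial univ (fun i => Finsupp.single (f i) 1)]
      exact Finset.prod_congr rfl fun i _ => by
        rw [← pow_one (X (f i) : MvPolynomial (Fin 4) S), X_pow_eq_monomial]
    rw [this, C_mul_monomial, mul_one]
  rw [Fintype.piFinset_univ]
  simp_rw [h1, MvPolynomial.coeff_sum, MvPolynomial.coeff_monomial]
  rw [Finset.sum_filter]

/-! ### Transfer between `ZMod 4`-vectors and `Fin 4`-vectors -/

lemma sum_type {M : Type*} [AddCommMonoid M] {n : ℕ} (t0 t1 t2 t3 : ℕ)
    (F : (Fin n → ZMod 4) → M) :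
    ∑ b ∈ univ.filter (fun b : Fin n → ZMod 4 => HasType b t0 t1 t2 t3), F b
      = ∑ f ∈ univ.filter (fun f : Fin n → Fin 4 => cnt f = mfun t0 t1 t2 t3),
          F (fun i => e4 (f i)) := by
  classical
  rw [Finset.sum_filter, Finset.sum_filter]
  rw [← Equiv.sum_comp (Equiv.piCongrRight fun _ : Fin n => e4)
        (fun b => if HasType b t0 t1 t2 t3 then F b else 0)]
  apply Finset.sum_congr rfl
  intro f _
  have he : (Equiv.piCongrRight fun _ : Fin n => e4) f = fun i => e4 (f i) := rfl
  rw [he]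
  exact if_congr (hasType_iff_cnt f t0 t1 t2 t3) rfl rfl

lemma card_type_eq_card_cnt {n : ℕ} (t0 t1 t2 t3 : ℕ) :
    (univ.filter (fun b : Fin n → ZMod 4 => HasType b t0 t1 t2 t3)).card
      = (univ.filter (fun f : Fin n → Fin 4 => cnt f = mfun t0 t1 t2 t3)).card := by
  classical
  have h := sum_type (M := ℕ) (n := n) t0 t1 t2 t3 (fun _ => 1)
  rwa [← Finset.card_eq_sum_ones, ← Finset.card_eq_sum_ones] at h

/-! ### Counting vectors of a given type: the multinomial coefficient -/

lemma msum_apply (k : Fin 4 → ℕ) (j : Fin 4) :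
    (∑ j' : Fin 4, Finsupp.single j' (k j')) j = k j := by
  rw [Finsupp.finset_sum_apply]
  rw [Finset.sum_eq_single j]
  · rw [Finsupp.single_eq_same]
  · intro j' _ hj'
    exact Finsupp.single_eq_of_ne' hj'
  · intro h; exact absurd (Finset.mem_univ j) h

lemma card_cnt (n : ℕ) (m : Fin 4 →₀ ℕ) (hm : ∑ j, m j = n) :
    (univ.filter fun f : Fin n → Fin 4 => cnt f = m).card
      = Nat.multinomial univ (fun j => m j) := by
  classical
  have key := coeff_prod_linear (S := ℕ) n (fun _ _ => 1) m
  have hL : (∏ i : Fin n, ∑ j : Fin 4, (C (1:ℕ) * X j : MvPolynomial (Fin 4) ℕ))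
      = (∑ j : Fin 4, (X j : MvPolynomial (Fin 4) ℕ)) ^ n := by
    rw [Finset.prod_const, Finset.card_univ, Fintype.card_fin]
    congr 1
    exact Finset.sum_congr rfl fun j _ => by rw [C_1, one_mul]
  rw [hL] at key
  have hR : (∑ f ∈ univ.filter (fun f : Fin n → Fin 4 => cnt f = m),
      ∏ _i : Fin n, (1:ℕ)) = (univ.filter fun f : Fin n → Fin 4 => cnt f = m).card := by
    rw [Finset.card_eq_sum_ones]
    exact Finset.sum_congr rfl fun f _ => Finset.prod_const_one
  rw [hR] at key
  -- now compute the coefficient via the multinomial theorem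
  rw [Finset.sum_pow_eq_sum_piAntidiag univ (fun j => (X j : MvPolynomial (Fin 4) ℕ)) n]
    at key
  have hterm : ∀ k : Fin 4 → ℕ,
      ((Nat.multinomial univ k : MvPolynomial (Fin 4) ℕ) * ∏ j, (X j) ^ k j)
        = monomial (∑ j : Fin 4, Finsupp.single j (k j)) (Nat.multinomial univ k) := by
    intro k
    have h1 : (∏ j, (X j : MvPolynomial (Fin 4) ℕ) ^ k j)
        = monomial (∑ j : Fin 4, Finsupp.single j (k j)) 1 := by
      rw [← prod_monomial univ (fun j => Finsupp.single j (k j))]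
      exact Finset.prod_congr rfl fun j _ => X_pow_eq_monomial
    have h2 : ((Nat.multinomial univ k : ℕ) : MvPolynomial (Fin 4) ℕ)
        = C (Nat.multinomial univ k) := by
      rw [← map_natCast (C : ℕ →+* MvPolynomial (Fin 4) ℕ), Nat.cast_id]
    rw [h1, h2, C_mul_monomial, mul_one]
  simp_rw [hterm, MvPolynomial.coeff_sum, MvPolynomial.coeff_monomial] at key
  rw [Finset.sum_eq_single (fun j : Fin 4 => m j)] at key
  · have hmm : (∑ j : Fin 4, Finsupp.single j (m j)) = m := by
      ext j; rw [msum_apply]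
    rw [← key]
    exact if_pos hmm
  · intro k _ hk
    rw [if_neg]
    intro hcon
    exact hk (funext fun j => by rw [← msum_apply k j, hcon])
  · intro hmem
    exfalso
    apply hmem
    rw [Finset.mem_piAntidiag]
    exact ⟨hm, fun j _ => Finset.mem_univ j⟩

lemma card_type {n : ℕ} (t0 t1 t2 t3 : ℕ) (h : t0 + t1 + t2 + t3 = n) :
    (univ.filter (fun b : Fin n → ZMod 4 => HasType b t0 t1 t2 t3)).card
      = Nat.multinomial univ ![t0, t1, t2, t3] := by
  rw [card_type_eq_card_cnt, card_cnt n _ (by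
    rw [Fin.sum_univ_four, mfun_0, mfun_1, mfun_2, mfun_3]; exact h)]
  apply Nat.multinomial_congr
  refine fin4_cases _ ?_ ?_ ?_ ?_ <;> intro _ <;>
    simp [mfun_0, mfun_1, mfun_2, mfun_3]

/-! ### Sums and products over `ZMod 4` -/

lemma univ_zmod4 : (univ : Finset (ZMod 4)) = {0, 1, 2, 3} := by decide

lemma prod_zmod4 {M : Type*} [CommMonoid M] (h : ZMod 4 → M) :
    ∏ k : ZMod 4, h k = h 0 * (h 1 * (h 2 * h 3)) := by
  rw [univ_zmod4]
  rw [show ({0, 1, 2, 3} : Finset (ZMod 4))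
      = insert 0 (insert 1 (insert 2 {3})) from rfl]
  rw [Finset.prod_insert (by decide), Finset.prod_insert (by decide),
    Finset.prod_insert (by decide), Finset.prod_singleton]

lemma sum_zmod4 {M : Type*} [AddCommMonoid M] (h : ZMod 4 → M) :
    ∑ k : ZMod 4, h k = h 0 + (h 1 + (h 2 + h 3)) := by
  rw [univ_zmod4]
  rw [show ({0, 1, 2, 3} : Finset (ZMod 4))
      = insert 0 (insert 1 (insert 2 {3})) from rfl]
  rw [Finset.sum_insert (by decide), Finset.sum_insert (by decide),
    Finset.sum_insert (by decide), Finset.sum_singleton]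

lemma prod_group {M : Type*} [CommMonoid M] {n : ℕ} (u : Fin n → ZMod 4) (g : ZMod 4 → M) :
    ∏ i, g (u i) = ∏ k : ZMod 4, g k ^ typeCount u k := by
  rw [← Finset.prod_fiberwise' univ u g]
  exact Finset.prod_congr rfl fun k _ => by rw [Finset.prod_const, typeCount]

lemma typeCount_sum {n : ℕ} (u : Fin n → ZMod 4) :
    ∑ k : ZMod 4, typeCount u k = n := by
  have := Finset.card_eq_sum_card_fiberwise
    (s := (univ : Finset (Fin n))) (t := (univ : Finset (ZMod 4))) (f := u)
    (fun x _ => Finset.mem_univ (u x))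
  rw [Finset.card_univ, Fintype.card_fin] at this
  unfold typeCount
  exact this.symm

/-! ### The linear forms `G k` -/

/-- The linear form attached to the residue `k`. -/
noncomputable def G (k : ZMod 4) : MvPolynomial (Fin 4) GaussianInt :=
  ∑ j : Fin 4, C (iot (k * e4 j)) * X j

/-- The key identity: a character sum over vectors of a fixed type is a
polynomial coefficient. -/
lemma key_sum {n : ℕ} (u : Fin n → ZMod 4) (t0 t1 t2 t3 : ℕ) (hu : HasType u t0 t1 t2 t3)
    (τ0 τ1 τ2 τ3 : ℕ) :
    ∑ b ∈ univ.filter (fun b : Fin n → ZMod 4 => HasType b τ0 τ1 τ2 τ3),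
        iot (∑ i, u i * b i)
      = MvPolynomial.coeff (mfun τ0 τ1 τ2 τ3)
          (G 0 ^ t0 * (G 1 ^ t1 * (G 2 ^ t2 * G 3 ^ t3))) := by
  rw [sum_type]
  rw [Finset.sum_congr rfl (fun f _ => iot_sum univ (fun i => u i * e4 (f i)))]
  rw [← coeff_prod_linear n (fun i j => iot (u i * e4 j)) (mfun τ0 τ1 τ2 τ3)]
  congr 1
  have h1 : (∏ i, ∑ j : Fin 4, C (iot (u i * e4 j)) * X j) = ∏ i, G (u i) := rfl
  rw [h1, prod_group u G, prod_zmod4 (fun k => G k ^ typeCount u k),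
    hu.1, hu.2.1, hu.2.2.1, hu.2.2.2]

/-! ### Negation symmetry -/

lemma typeCount_neg {n : ℕ} (b : Fin n → ZMod 4) (k : ZMod 4) :
    typeCount (fun i => -b i) k = typeCount b (-k) := by
  unfold typeCount
  congr 1
  apply Finset.filter_congr
  intro i _
  simp only [neg_eq_iff_eq_neg]

lemma hasType_neg {n : ℕ} (b : Fin n → ZMod 4) (r s : ℕ) :
    HasType (fun i => -b i) r s r s ↔ HasType b r s r s := by
  unfold HasType
  rw [typeCount_neg, typeCount_neg, typeCount_neg, typeCount_neg]
  rw [show -(0 : ZMod 4) = 0 from by decide, show -(1 : ZMod 4) = 3 from by decide,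
    show -(2 : ZMod 4) = 2 from by decide, show -(3 : ZMod 4) = 1 from by decide]
  tauto

lemma Scard_three {n : ℕ} (r s : ℕ) (v : Fin n → ZMod 4) :
    Scard r s v 3 = Scard r s v 1 := by
  classical
  unfold Scard
  apply Finset.card_nbij' (i := fun b => fun i => -b i) (j := fun b => fun i => -b i)
  · intro b hb
    rw [Finset.mem_coe, Finset.mem_filter] at hb ⊢
    obtain ⟨-, hb1, hb2⟩ := hb
    refine ⟨Finset.mem_univ _, (hasType_neg b r s).2 hb1, ?_⟩
    have : (∑ i, v i * -b i) = -(∑ i, v i * b i) := by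
      rw [← Finset.sum_neg_distrib]
      exact Finset.sum_congr rfl fun i _ => (mul_neg _ _)
    rw [this, hb2]
    decide
  · intro b hb
    rw [Finset.mem_coe, Finset.mem_filter] at hb ⊢
    obtain ⟨-, hb1, hb2⟩ := hb
    refine ⟨Finset.mem_univ _, (hasType_neg b r s).2 hb1, ?_⟩
    have : (∑ i, v i * -b i) = -(∑ i, v i * b i) := by
      rw [← Finset.sum_neg_distrib]
      exact Finset.sum_congr rfl fun i _ => (mul_neg _ _)
    rw [this, hb2]
    decide
  · intro b _; funext i; simp
  · intro b _; funext i; simp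

/-! ### The eigenvalue as a character sum -/

lemma lambda_eq {n : ℕ} (r s : ℕ) (v : Fin n → ZMod 4) :
    ((lambdaEV r s v : ℤ) : GaussianInt)
      = ∑ b ∈ univ.filter (fun b : Fin n → ZMod 4 => HasType b r s r s),
          iot (∑ i, v i * b i) := by
  classical
  rw [← Finset.sum_fiberwise (univ.filter fun b : Fin n → ZMod 4 => HasType b r s r s)
    (fun b => ∑ i, v i * b i) (fun b => iot (∑ i, v i * b i))]
  have hfib : ∀ a : ZMod 4,
      (∑ b ∈ (univ.filter fun b : Fin n → ZMod 4 => HasType b r s r s).filter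
          (fun b => (∑ i, v i * b i) = a), iot (∑ i, v i * b i))
        = (Scard r s v a : GaussianInt) * iot a := by
    intro a
    rw [Finset.sum_congr rfl (fun b hb => by
      rw [(Finset.mem_filter.1 hb).2])]
    rw [Finset.sum_const, nsmul_eq_mul]
    congr 2
    rw [Scard, Finset.filter_filter]
  rw [Finset.sum_congr rfl (fun a _ => hfib a)]
  rw [sum_zmod4 (fun a => (Scard r s v a : GaussianInt) * iot a)]
  rw [iot_zero, iot_one, iot_two, iot_three, Scard_three, lambdaEV]
  push_cast
  ring

/-! ### Explicit forms of the `G k` -/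

lemma G_expand (k : ZMod 4) :
    G k = C (iot (k * 0)) * X 0 + C (iot (k * 1)) * X 1
        + C (iot (k * 2)) * X 2 + C (iot (k * 3)) * X 3 := by
  rw [G, Fin.sum_univ_four, show e4 0 = (0 : ZMod 4) from by decide,
    show e4 1 = (1 : ZMod 4) from by decide, show e4 2 = (2 : ZMod 4) from by decide,
    show e4 3 = (3 : ZMod 4) from by decide]

lemma G_zero : G 0 = X 0 + X 1 + X 2 + X 3 := by
  rw [G_expand, show (0 : ZMod 4) * 0 = 0 from by decide,
    show (0 : ZMod 4) * 1 = 0 from by decide, show (0 : ZMod 4) * 2 = 0 from by decide,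
    show (0 : ZMod 4) * 3 = 0 from by decide, iot_zero, C_1, one_mul, one_mul, one_mul,
    one_mul]

lemma G_two : G 2 = X 0 - X 1 + X 2 - X 3 := by
  rw [G_expand, show (2 : ZMod 4) * 0 = 0 from by decide,
    show (2 : ZMod 4) * 1 = 2 from by decide, show (2 : ZMod 4) * 2 = 0 from by decide,
    show (2 : ZMod 4) * 3 = 2 from by decide, iot_zero, iot_two, C_1, map_neg, C_1]
  ring

lemma G_one : G 1 = X 0 + C gi * X 1 - X 2 - C gi * X 3 := by
  rw [G_expand, show (1 : ZMod 4) * 0 = 0 from by decide,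
    show (1 : ZMod 4) * 1 = 1 from by decide, show (1 : ZMod 4) * 2 = 2 from by decide,
    show (1 : ZMod 4) * 3 = 3 from by decide, iot_zero, iot_one, iot_two, iot_three,
    C_1, map_neg, map_neg, C_1]
  ring

lemma G_three : G 3 = X 0 - C gi * X 1 - X 2 + C gi * X 3 := by
  rw [G_expand, show (3 : ZMod 4) * 0 = 0 from by decide,
    show (3 : ZMod 4) * 1 = 3 from by decide, show (3 : ZMod 4) * 2 = 2 from by decide,
    show (3 : ZMod 4) * 3 = 1 from by decide, iot_zero, iot_one, iot_two, iot_three,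
    C_1, map_neg, map_neg, C_1]
  ring

lemma G02 : G 0 * G 2 = (X 0 + X 2) ^ 2 - (X 1 + X 3) ^ 2 := by
  rw [G_zero, G_two]; ring

lemma G13 : G 1 * G 3 = (X 0 - X 2) ^ 2 + (X 1 - X 3) ^ 2 := by
  rw [G_one, G_three]
  have hgi : (C gi : MvPolynomial (Fin 4) GaussianInt) ^ 2 = -1 := by
    rw [← C_pow, gi_sq]; simp
  linear_combination (-(X 1 - X 3) ^ 2 : MvPolynomial (Fin 4) GaussianInt) * hgi

open MvPolynomial in
/-- `C(n; t₀,t₁,t₂,t₃)·λ(v)` equals `C(n; r,s,r,s)` times the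
coefficient of `x^{t₀} y^{t₁} z^{t₂} w^{t₃}` in
`((x+z)² - (y+w)²)^r ((x-z)² + (y-w)²)^s`. -/
theorem eigenvalue_formula (r s n : ℕ) (hn : n = 2 * (r + s)) (hn1 : 1 ≤ n)
    (v : Fin n → ZMod 4) (t0 t1 t2 t3 : ℕ) (hv : HasType v t0 t1 t2 t3) :
    (Nat.multinomial Finset.univ ![t0, t1, t2, t3] : ℤ) * lambdaEV r s v =
      (multinomRSRS r s : ℤ) *
        MvPolynomial.coeff
          (Finsupp.single 0 t0 + Finsupp.single 1 t1 +
            Finsupp.single 2 t2 + Finsupp.single 3 t3)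
          (((X 0 + X 2) ^ 2 - (X 1 + X 3) ^ 2) ^ r *
            ((X 0 - X 2) ^ 2 + (X 1 - X 3) ^ 2) ^ s :
            MvPolynomial (Fin 4) ℤ) := by
  classical
  have hsum_t : t0 + t1 + t2 + t3 = n := by
    have h := typeCount_sum v
    rw [sum_zmod4 (typeCount v), hv.1, hv.2.1, hv.2.2.1, hv.2.2.2] at h
    omega
  set Pt := G 0 ^ t0 * (G 1 ^ t1 * (G 2 ^ t2 * G 3 ^ t3)) with hPt
  set Pτ := G 0 ^ r * (G 1 ^ s * (G 2 ^ r * G 3 ^ s)) with hPτ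
  -- double counting
  have hDC :
      (univ.filter (fun u : Fin n → ZMod 4 => HasType u t0 t1 t2 t3)).card •
          MvPolynomial.coeff (mfun r s r s) Pt
        = (univ.filter (fun b : Fin n → ZMod 4 => HasType b r s r s)).card •
          MvPolynomial.coeff (mfun t0 t1 t2 t3) Pτ := by
    rw [← Finset.sum_const, ← Finset.sum_const]
    rw [Finset.sum_congr rfl (fun u hu =>
      (key_sum u t0 t1 t2 t3 (Finset.mem_filter.1 hu).2 r s r s).symm)]
    rw [Finset.sum_congr rfl (fun b hb =>
      (key_sum b r s r s (Finset.mem_filter.1 hb).2 t0 t1 t2 t3).symm)]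
    rw [Finset.sum_comm]
    refine Finset.sum_congr rfl fun b _ => Finset.sum_congr rfl fun u _ => ?_
    congr 1
    exact Finset.sum_congr rfl fun i _ => mul_comm _ _
  have hlam : ((lambdaEV r s v : ℤ) : GaussianInt)
      = MvPolynomial.coeff (mfun r s r s) Pt :=
    (lambda_eq r s v).trans (key_sum v t0 t1 t2 t3 hv r s r s)
  have hct : (univ.filter (fun u : Fin n → ZMod 4 => HasType u t0 t1 t2 t3)).card
      = Nat.multinomial univ ![t0, t1, t2, t3] := card_type t0 t1 t2 t3 hsum_t
  have hcτ : (univ.filter (fun b : Fin n → ZMod 4 => HasType b r s r s)).card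
      = Nat.multinomial univ ![r, s, r, s] := card_type r s r s (by omega)
  have hco : MvPolynomial.coeff (mfun t0 t1 t2 t3) Pτ
      = ((MvPolynomial.coeff (mfun t0 t1 t2 t3)
          (((X 0 + X 2) ^ 2 - (X 1 + X 3) ^ 2) ^ r *
            ((X 0 - X 2) ^ 2 + (X 1 - X 3) ^ 2) ^ s :
            MvPolynomial (Fin 4) ℤ) : ℤ) : GaussianInt) := by
    have hmap : Pτ = MvPolynomial.map (Int.castRingHom GaussianInt)
        ((((X 0 + X 2) ^ 2 - (X 1 + X 3) ^ 2) ^ r *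
          ((X 0 - X 2) ^ 2 + (X 1 - X 3) ^ 2) ^ s : MvPolynomial (Fin 4) ℤ)) := by
      simp only [map_mul, map_pow, map_sub, map_add, MvPolynomial.map_X]
      rw [hPτ, ← G02, ← G13]
      ring
    rw [hmap, MvPolynomial.coeff_map]
    rfl
  have hinj : Function.Injective (Int.cast : ℤ → GaussianInt) := fun a b h => by
    simpa using congrArg Zsqrtd.re h
  have hm : (Finsupp.single 0 t0 + Finsupp.single 1 t1 + Finsupp.single 2 t2 +
      Finsupp.single 3 t3 : Fin 4 →₀ ℕ) = mfun t0 t1 t2 t3 := rfl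
  rw [hm, multinomRSRS]
  apply hinj
  push_cast
  rw [hlam, ← hco]
  rw [nsmul_eq_mul, nsmul_eq_mul, hct, hcτ] at hDC
  push_cast at hDC
  exact hDC
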